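/- Consider the reduced planar system Σ' = ((C₂Σ² - 1)(3γ + 4(γ-1)C₂Σ - 2) + K(3γ + 2(γ-1)C₂Σ - 2))/(2(γ-1)C₂), K' = 2K(2C₂Σ² + K - 1), with 1 < γ < 2 and C₂ > 0. The point (Σ,K) = ((3γ-2)/(4C₂(1-γ))·(-1)·(-1), 0) — i.e. Σ = -(2-3γ)/(4C₂(1-γ)), K = 0 — is an equilibrium whose Jacobian has eigenvalues ((2-3γ)² - 16(γ-1)²C₂)/(8(γ-1)²C₂) and ((2-3γ)² - 8(γ-1)²C₂)/(4(γ-1)²C₂); in particular both eigenvalues are negative (local attractor) if and only if C₂ > (2-3γ)²/(8(γ-1)²). -/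

import Mathlib

noncomputable section

/-- Reduced planar system on the invariant set `A = v = 0`:
components `(Σ', K')` as functions of `(Σ, K)`. -/
def Fred (γ C₂ : ℝ) : ℝ × ℝ → ℝ × ℝ := fun p =>
  (((C₂ * p.1 ^ 2 - 1) * (3 * γ + 4 * (γ - 1) * C₂ * p.1 - 2) +
      p.2 * (3 * γ + 2 * (γ - 1) * C₂ * p.1 - 2)) / (2 * (γ - 1) * C₂),
    2 * p.2 * (2 * C₂ * p.1 ^ 2 + p.2 - 1))

set_option maxHeartbeats 2000000 in
/-- The equilibrium `P₁₃ : (Σ, K) = (-(2-3γ)/(4C₂(1-γ)), 0)` of the reduced system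
has Jacobian eigenvalues `((2-3γ)² - 16(γ-1)²C₂)/(8(γ-1)²C₂)` and
`((2-3γ)² - 8(γ-1)²C₂)/(4(γ-1)²C₂)`, which are both negative (local attractor)
iff `C₂ > (2-3γ)²/(8(γ-1)²)`. -/
theorem P13_eigenvalues (γ C₂ : ℝ) (hγ₁ : 1 < γ) (hγ₂ : γ < 2) (hC : 0 < C₂) :
    Fred γ C₂ (-(2 - 3 * γ) / (4 * C₂ * (1 - γ)), 0) = 0 ∧
    Module.End.HasEigenvalue
      ((fderiv ℝ (Fred γ C₂) (-(2 - 3 * γ) / (4 * C₂ * (1 - γ)), 0)).toLinearMap)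
      (((2 - 3 * γ) ^ 2 - 16 * (γ - 1) ^ 2 * C₂) / (8 * (γ - 1) ^ 2 * C₂)) ∧
    Module.End.HasEigenvalue
      ((fderiv ℝ (Fred γ C₂) (-(2 - 3 * γ) / (4 * C₂ * (1 - γ)), 0)).toLinearMap)
      (((2 - 3 * γ) ^ 2 - 8 * (γ - 1) ^ 2 * C₂) / (4 * (γ - 1) ^ 2 * C₂)) ∧
    ((((2 - 3 * γ) ^ 2 - 16 * (γ - 1) ^ 2 * C₂) / (8 * (γ - 1) ^ 2 * C₂) < 0 ∧
      ((2 - 3 * γ) ^ 2 - 8 * (γ - 1) ^ 2 * C₂) / (4 * (γ - 1) ^ 2 * C₂) < 0) ↔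
      (2 - 3 * γ) ^ 2 / (8 * (γ - 1) ^ 2) < C₂) := by
  have hγ : (0:ℝ) < γ - 1 := by linarith
  have hγ0 : γ - 1 ≠ 0 := ne_of_gt hγ
  have h1γ : 1 - γ ≠ 0 := by intro h; apply hγ0; linarith
  have hC0 : C₂ ≠ 0 := ne_of_gt hC
  have hc : (2 * (γ - 1) * C₂ : ℝ) ≠ 0 := by positivity
  -- the stability criterion (independent of the derivative computation)
  have hiff : (((2 - 3 * γ) ^ 2 - 16 * (γ - 1) ^ 2 * C₂) / (8 * (γ - 1) ^ 2 * C₂) < 0 ∧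
      ((2 - 3 * γ) ^ 2 - 8 * (γ - 1) ^ 2 * C₂) / (4 * (γ - 1) ^ 2 * C₂) < 0) ↔
      (2 - 3 * γ) ^ 2 / (8 * (γ - 1) ^ 2) < C₂ := by
    have hden1 : (0:ℝ) < 8 * (γ - 1) ^ 2 * C₂ := by positivity
    have hden2 : (0:ℝ) < 4 * (γ - 1) ^ 2 * C₂ := by positivity
    have hden3 : (0:ℝ) < 8 * (γ - 1) ^ 2 := by positivity
    rw [div_neg_iff, div_neg_iff, div_lt_iff₀ hden3]
    constructor
    · rintro ⟨h1 | h1, h2 | h2⟩ <;> nlinarith [h1.1, h1.2, h2.1, h2.2]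
    · intro h
      exact ⟨Or.inr ⟨by nlinarith, hden1⟩, Or.inr ⟨by nlinarith, hden2⟩⟩
  set pt : ℝ × ℝ := (-(2 - 3 * γ) / (4 * C₂ * (1 - γ)), 0) with hpt
  -- derivative
  have hfst := hasFDerivAt_fst (𝕜 := ℝ) (p := pt)
  have hsnd := hasFDerivAt_snd (𝕜 := ℝ) (p := pt)
  have hsq : HasFDerivAt (fun q : ℝ × ℝ => q.1 ^ 2)
      ((↑2 * pt.1 ^ (2 - 1)) • ContinuousLinearMap.fst ℝ ℝ ℝ) pt :=
    (hasDerivAt_pow 2 pt.1).comp_hasFDerivAt pt hfst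
  have h1 := (hsq.const_mul C₂).sub_const 1
  have h2 := ((hfst.const_mul (4*(γ-1)*C₂)).const_add (3*γ)).sub_const 2
  have h3 := hsnd.mul (((hfst.const_mul (2*(γ-1)*C₂)).const_add (3*γ)).sub_const 2)
  have hg' := ((h1.mul h2).add h3).mul_const ((2*(γ-1)*C₂)⁻¹)
  have hg : HasFDerivAt (𝕜 := ℝ) (fun x : ℝ × ℝ =>
      ((C₂ * x.1 ^ 2 - 1) * (3 * γ + 4 * (γ - 1) * C₂ * x.1 - 2) +
        x.2 * (3 * γ + 2 * (γ - 1) * C₂ * x.1 - 2)) / (2 * (γ - 1) * C₂))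
      ((2 * (γ - 1) * C₂)⁻¹ •
        ((C₂ * pt.1 ^ 2 - 1) • (4 * (γ - 1) * C₂) • ContinuousLinearMap.fst ℝ ℝ ℝ +
            (3 * γ + 4 * (γ - 1) * C₂ * pt.1 - 2) • C₂ • ((2 : ℝ) * pt.1 ^ (2 - 1)) •
              ContinuousLinearMap.fst ℝ ℝ ℝ +
          (pt.2 • (2 * (γ - 1) * C₂) • ContinuousLinearMap.fst ℝ ℝ ℝ +
            (3 * γ + 2 * (γ - 1) * C₂ * pt.1 - 2) • ContinuousLinearMap.snd ℝ ℝ ℝ))) pt := by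
    simp only [div_eq_mul_inv]
    exact hg'
  have h4 := hsnd.const_mul 2
  have h5 := ((hsq.const_mul (2*C₂)).add hsnd).sub_const 1
  have hF : HasFDerivAt (Fred γ C₂) _ pt := HasFDerivAt.prodMk hg (h4.mul h5)
  have hD := hF.fderiv
  rw [hD]
  clear hD hF hg hg' h1 h2 h3 h4 h5 hsq hfst hsnd
  refine ⟨?_, ?_, ?_, hiff⟩
  · show Fred γ C₂ pt = 0
    simp only [Fred, Prod.mk_eq_zero]
    constructor
    · simp only [hpt]
      field_simp
      ring
    · norm_num
  · apply Module.End.hasEigenvalue_of_hasEigenvector (x := ((1:ℝ), (0:ℝ)))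
    refine ⟨Module.End.mem_eigenspace_iff.mpr ?_, by simp⟩
    show _ = _
    simp only [ContinuousLinearMap.coe_coe, ContinuousLinearMap.prod_apply,
      ContinuousLinearMap.add_apply, ContinuousLinearMap.smul_apply,
      ContinuousLinearMap.coe_fst', ContinuousLinearMap.coe_snd',
      ContinuousLinearMap.coe_smul', Pi.smul_apply, smul_eq_mul, Prod.smul_mk]
    rw [Prod.mk.injEq]
    norm_num
    simp only [hpt]
    field_simp
    ring
  · apply Module.End.hasEigenvalue_of_hasEigenvector
      (x := ((2*(γ-1)*(3*γ-2) : ℝ), ((3*γ-2)^2 : ℝ)))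
    have h32 : (0:ℝ) < 3*γ-2 := by linarith
    refine ⟨Module.End.mem_eigenspace_iff.mpr ?_, ?_⟩
    · show _ = _
      simp only [ContinuousLinearMap.coe_coe, ContinuousLinearMap.prod_apply,
        ContinuousLinearMap.add_apply, ContinuousLinearMap.smul_apply,
        ContinuousLinearMap.coe_fst', ContinuousLinearMap.coe_snd',
        ContinuousLinearMap.coe_smul', Pi.smul_apply, smul_eq_mul, Prod.smul_mk]
      rw [Prod.mk.injEq]
      norm_num
      constructor
      · simp only [hpt]
        field_simp
        ring
      · simp only [hpt]
        field_simp
        ring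
    · simp only [ne_eq, Prod.mk_eq_zero, not_and]
      intro _
      positivity
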